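/- Let G be a group and ρ: G → Sp(1) an irreducible projective representation. Suppose α, β: G → {±1} are group homomorphisms with α ≠ 1, β ≠ 1, α ≠ β, such that each of the twisted representations ρ^α and ρ^β is conjugate to ρ (i.e., there exist u, v ∈ Sp(1) with α(g)ρ(g) = u ρ(g) u⁻¹ and β(g)ρ(g) = v ρ(g) v⁻¹ for all g ∈ G). Then there exists w ∈ Sp(1) such that w ρ(g) w⁻¹ ∈ Q8 = {±1, ±i, ±j, ±k} for every g ∈ G; in particular ρ factors, up to conjugacy, through the quaternion group of order 8. -/

import Mathlib

noncomputable section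

open Quaternion

/-- A projective representation of `G` in the group `Sp(1)` of unit quaternions:
a function with values of norm one such that `ρ(gh)ρ(h)⁻¹ρ(g)⁻¹ ∈ {±1}`. -/
def IsProjRep {G : Type*} [Group G] (ρ : G → ℍ[ℝ]) : Prop :=
  (∀ g : G, ‖ρ g‖ = 1) ∧
    ∀ g h : G, ρ (g * h) * (ρ h)⁻¹ * (ρ g)⁻¹ = 1 ∨ ρ (g * h) * (ρ h)⁻¹ * (ρ g)⁻¹ = -1

/-- A homomorphism from `G` into the subgroup `{±1}` of unit quaternions. -/
def IsSignHom {G : Type*} [Group G] (χ : G → ℍ[ℝ]) : Prop :=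
  (∀ g : G, χ g = 1 ∨ χ g = -1) ∧ ∀ g h : G, χ (g * h) = χ g * χ h

/-- A projective representation `ρ` is irreducible if the centralizer of its image in `Sp(1)`
is `{±1}`. -/
def IsIrred {G : Type*} [Group G] (ρ : G → ℍ[ℝ]) : Prop :=
  ∀ q : ℍ[ℝ], ‖q‖ = 1 → (∀ g : G, q * ρ g = ρ g * q) → q = 1 ∨ q = -1

def qi : ℍ[ℝ] := ⟨0, 1, 0, 0⟩
def qj : ℍ[ℝ] := ⟨0, 0, 1, 0⟩
def qk : ℍ[ℝ] := ⟨0, 0, 0, 1⟩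

/-- The quaternion group `Q8 = {±1, ±i, ±j, ±k}` inside the unit quaternions. -/
def Q8 : Set ℍ[ℝ] := {1, -1, qi, -qi, qj, -qj, qk, -qk}

/-! ### Auxiliary lemmas -/

lemma sq_pm {q : ℍ[ℝ]} (h : q * q = 1) : q = 1 ∨ q = -1 := by
  have h0 : (q - 1) * (q + 1) = 0 := by
    have e : (q - 1) * (q + 1) = q * q - 1 := by rw [sub_mul, mul_add, mul_one, one_mul]; abel
    rw [e, h, sub_self]
  rcases mul_eq_zero.mp h0 with h1 | h1
  · left; exact sub_eq_zero.mp h1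
  · right; exact eq_neg_of_add_eq_zero_left h1

lemma pure_of_sq_neg_one {q : ℍ[ℝ]} (h : q * q = -1) : q.re = 0 := by
  have h1 := congrArg QuaternionAlgebra.imI h
  have h2 := congrArg QuaternionAlgebra.imJ h
  have h3 := congrArg QuaternionAlgebra.imK h
  have h0 := congrArg QuaternionAlgebra.re h
  simp [Quaternion.imI_mul] at h1
  simp [Quaternion.imJ_mul] at h2
  simp [Quaternion.imK_mul] at h3
  simp [Quaternion.re_mul] at h0
  nlinarith [sq_nonneg q.re, sq_nonneg q.imI, sq_nonneg q.imJ, sq_nonneg q.imK,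
    sq_nonneg (q.re*q.imI), sq_nonneg (q.re*q.imJ), sq_nonneg (q.re*q.imK)]

lemma real_pm {r : ℝ} (h : r^2 = 1) : r = 1 ∨ r = -1 := by
  rcases mul_eq_zero.mp (show (r-1)*(r+1) = 0 by nlinarith) with h | h
  · left; linarith
  · right; linarith

lemma comp_eqs {x y : ℍ[ℝ]} (h : x = y) :
    x.re = y.re ∧ x.imI = y.imI ∧ x.imJ = y.imJ ∧ x.imK = y.imK :=
  ⟨congrArg _ h, congrArg _ h, congrArg _ h, congrArg _ h⟩

lemma comm_i {x : ℍ[ℝ]} (h : qi*x = x*qi) : x.imJ = 0 ∧ x.imK = 0 := by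
  obtain ⟨h1, h2, h3, h4⟩ := comp_eqs h
  simp only [Quaternion.re_mul, Quaternion.imI_mul, Quaternion.imJ_mul,
    Quaternion.imK_mul] at h1 h2 h3 h4
  simp only [qi] at h1 h2 h3 h4
  constructor <;> linarith

lemma anticomm_i {x : ℍ[ℝ]} (h : qi*x = -(x*qi)) : x.re = 0 ∧ x.imI = 0 := by
  obtain ⟨h1, h2, h3, h4⟩ := comp_eqs h
  simp only [Quaternion.re_mul, Quaternion.imI_mul, Quaternion.imJ_mul,
    Quaternion.imK_mul, Quaternion.re_neg, Quaternion.imI_neg, Quaternion.imJ_neg,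
    Quaternion.imK_neg] at h1 h2 h3 h4
  simp only [qi] at h1 h2 h3 h4
  constructor <;> linarith

lemma comm_j {x : ℍ[ℝ]} (h : qj*x = x*qj) : x.imI = 0 ∧ x.imK = 0 := by
  obtain ⟨h1, h2, h3, h4⟩ := comp_eqs h
  simp only [Quaternion.re_mul, Quaternion.imI_mul, Quaternion.imJ_mul,
    Quaternion.imK_mul] at h1 h2 h3 h4
  simp only [qj] at h1 h2 h3 h4
  constructor <;> linarith

lemma anticomm_j {x : ℍ[ℝ]} (h : qj*x = -(x*qj)) : x.re = 0 ∧ x.imJ = 0 := by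
  obtain ⟨h1, h2, h3, h4⟩ := comp_eqs h
  simp only [Quaternion.re_mul, Quaternion.imI_mul, Quaternion.imJ_mul,
    Quaternion.imK_mul, Quaternion.re_neg, Quaternion.imI_neg, Quaternion.imJ_neg,
    Quaternion.imK_neg] at h1 h2 h3 h4
  simp only [qj] at h1 h2 h3 h4
  constructor <;> linarith

lemma cls_one {x : ℍ[ℝ]} (hn : x.re^2+x.imI^2+x.imJ^2+x.imK^2 = 1)
    (h1 : x.imI = 0) (h2 : x.imJ = 0) (h3 : x.imK = 0) : x = 1 ∨ x = -1 := by
  rcases real_pm (show x.re^2 = 1 by nlinarith) with h | h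
  · left; ext <;> simp [h, h1, h2, h3]
  · right; ext <;> simp [h, h1, h2, h3]

lemma cls_i {x : ℍ[ℝ]} (hn : x.re^2+x.imI^2+x.imJ^2+x.imK^2 = 1)
    (h1 : x.re = 0) (h2 : x.imJ = 0) (h3 : x.imK = 0) : x = qi ∨ x = -qi := by
  rcases real_pm (show x.imI^2 = 1 by nlinarith) with h | h
  · left; ext <;> simp [qi, h, h1, h2, h3]
  · right; ext <;> simp [h, h1, h2, h3] <;> simp [qi]

lemma cls_j {x : ℍ[ℝ]} (hn : x.re^2+x.imI^2+x.imJ^2+x.imK^2 = 1)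
    (h1 : x.re = 0) (h2 : x.imI = 0) (h3 : x.imK = 0) : x = qj ∨ x = -qj := by
  rcases real_pm (show x.imJ^2 = 1 by nlinarith) with h | h
  · left; ext <;> simp [qj, h, h1, h2, h3]
  · right; ext <;> simp [h, h1, h2, h3] <;> simp [qj]

lemma cls_k {x : ℍ[ℝ]} (hn : x.re^2+x.imI^2+x.imJ^2+x.imK^2 = 1)
    (h1 : x.re = 0) (h2 : x.imI = 0) (h3 : x.imJ = 0) : x = qk ∨ x = -qk := by
  rcases real_pm (show x.imK^2 = 1 by nlinarith) with h | h
  · left; ext <;> simp [qk, h, h1, h2, h3]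
  · right; ext <;> simp [h, h1, h2, h3] <;> simp [qk]

lemma comm_pure_units {u v : ℍ[ℝ]} (hur : u.re = 0) (hvr : v.re = 0)
    (hun : u.imI^2 + u.imJ^2 + u.imK^2 = 1) (hc : u*v = v*u) :
    v = (u.imI*v.imI + u.imJ*v.imJ + u.imK*v.imK) • u := by
  obtain ⟨h1, h2, h3, h4⟩ := comp_eqs hc
  simp only [Quaternion.re_mul, Quaternion.imI_mul, Quaternion.imJ_mul, Quaternion.imK_mul,
    hur, hvr] at h1 h2 h3 h4
  ext
  · simp [hur, hvr]
  · simp only [Quaternion.imI_smul, smul_eq_mul]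
    linear_combination (-v.imI) * hun + (u.imK/2) * h3 + (-u.imJ/2) * h4
  · simp only [Quaternion.imJ_smul, smul_eq_mul]
    linear_combination (-v.imJ) * hun + (u.imI/2) * h4 + (-u.imK/2) * h2
  · simp only [Quaternion.imK_smul, smul_eq_mul]
    linear_combination (-v.imK) * hun + (u.imJ/2) * h2 + (-u.imI/2) * h3

/-! ### Ring computation lemmas -/

lemma sq_comm_pos {R : Type*} [Ring R] {u y : R} (h : u*y = y*u) : (u*u)*y = y*(u*u) := by
  rw [mul_assoc, h, ← mul_assoc, h, mul_assoc]

lemma sq_comm_neg {R : Type*} [Ring R] {u y : R} (h : u*y = -(y*u)) : (u*u)*y = y*(u*u) := by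
  rw [mul_assoc, h, mul_neg, ← mul_assoc, h, neg_mul, neg_neg, mul_assoc]

lemma mul_conj_pp {R : Type*} [Ring R] {u v y : R} (hu : u*y = y*u) (hv : v*y = y*v) :
    (u*v)*y = y*(u*v) := by rw [mul_assoc, hv, ← mul_assoc, hu, mul_assoc]

lemma mul_conj_pn {R : Type*} [Ring R] {u v y : R} (hu : u*y = y*u) (hv : v*y = -(y*v)) :
    (u*v)*y = -(y*(u*v)) := by rw [mul_assoc, hv, mul_neg, ← mul_assoc, hu, mul_assoc]

lemma mul_conj_np {R : Type*} [Ring R] {u v y : R} (hu : u*y = -(y*u)) (hv : v*y = y*v) :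
    (u*v)*y = -(y*(u*v)) := by rw [mul_assoc, hv, ← mul_assoc, hu, neg_mul, mul_assoc]

lemma mul_conj_nn {R : Type*} [Ring R] {u v y : R} (hu : u*y = -(y*u)) (hv : v*y = -(y*v)) :
    (u*v)*y = y*(u*v) := by
  rw [mul_assoc, hv, mul_neg, ← mul_assoc, hu, neg_mul, neg_neg, mul_assoc]

lemma inv_comm_pos {K : Type*} [DivisionRing K] {B y : K} (hB : B ≠ 0) (h : B*y = y*B) :
    B⁻¹*y = y*B⁻¹ := by
  calc B⁻¹*y = B⁻¹*y*(B*B⁻¹) := by rw [mul_inv_cancel₀ hB, mul_one]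
    _ = B⁻¹*(y*B)*B⁻¹ := by noncomm_ring
    _ = B⁻¹*(B*y)*B⁻¹ := by rw [h]
    _ = y*B⁻¹ := by rw [← mul_assoc, inv_mul_cancel₀ hB, one_mul]

lemma inv_comm_neg {K : Type*} [DivisionRing K] {B y : K} (hB : B ≠ 0) (h : B*y = -(y*B)) :
    B⁻¹*y = -(y*B⁻¹) := by
  have h' : y*B = -(B*y) := by rw [h, neg_neg]
  calc B⁻¹*y = B⁻¹*y*(B*B⁻¹) := by rw [mul_inv_cancel₀ hB, mul_one]
    _ = B⁻¹*(y*B)*B⁻¹ := by noncomm_ring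
    _ = B⁻¹*(-(B*y))*B⁻¹ := by rw [h']
    _ = -(B⁻¹*(B*y)*B⁻¹) := by noncomm_ring
    _ = -(y*B⁻¹) := by rw [← mul_assoc, inv_mul_cancel₀ hB, one_mul]

lemma fixA {R : Type*} [Ring R] {i j k u v : R} (hii : i*i = -1) (huu : u*u = -1)
    (hij : i*j = k) (hik : i*k = -j) (hvu : v*u = -(u*v)) (e : R) :
    (e - i*(e*u) - j*(e*v) - k*(e*(u*v))) * u = i * (e - i*(e*u) - j*(e*v) - k*(e*(u*v))) := by
  have huvu : (u*v)*u = v := by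
    rw [mul_assoc, hvu, mul_neg, ← mul_assoc, huu]; simp
  calc (e - i*(e*u) - j*(e*v) - k*(e*(u*v))) * u
      = e*u - i*(e*(u*u)) - j*(e*(v*u)) - k*(e*((u*v)*u)) := by
        simp only [sub_mul, mul_assoc]
    _ = e*u + i*e + j*(e*(u*v)) - k*(e*v) := by
        rw [huu, hvu, huvu]; simp only [mul_neg, mul_one, neg_neg]; abel
    _ = i * (e - i*(e*u) - j*(e*v) - k*(e*(u*v))) := by
        rw [mul_sub, mul_sub, mul_sub, ← mul_assoc i i, hii, ← mul_assoc i j, hij,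
          ← mul_assoc i k, hik]
        simp only [neg_one_mul, neg_mul, neg_neg, sub_neg_eq_add, one_mul]
        abel

lemma fixB {R : Type*} [Ring R] {i j k u v : R} (hjj : j*j = -1) (hvv : v*v = -1)
    (hji : j*i = -k) (hjk : j*k = i) (e : R) :
    (e - i*(e*u) - j*(e*v) - k*(e*(u*v))) * v = j * (e - i*(e*u) - j*(e*v) - k*(e*(u*v))) := by
  have huvv : (u*v)*v = -u := by rw [mul_assoc, hvv]; simp
  calc (e - i*(e*u) - j*(e*v) - k*(e*(u*v))) * v
      = e*v - i*(e*(u*v)) - j*(e*(v*v)) - k*(e*((u*v)*v)) := by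
        simp only [sub_mul, mul_assoc]
    _ = e*v - i*(e*(u*v)) + j*e + k*(e*u) := by
        rw [hvv, huvv]; simp only [mul_neg, mul_one, neg_neg]; abel
    _ = j * (e - i*(e*u) - j*(e*v) - k*(e*(u*v))) := by
        rw [mul_sub, mul_sub, mul_sub, ← mul_assoc j i, hji, ← mul_assoc j j, hjj,
          ← mul_assoc j k, hjk]
        simp only [neg_one_mul, neg_mul, neg_neg, sub_neg_eq_add, one_mul]
        abel

def Tmap (u v e : ℍ[ℝ]) : ℍ[ℝ] := e - qi*(e*u) - qj*(e*v) - qk*(e*(u*v))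

lemma trace_four (u v : ℍ[ℝ]) :
    (Tmap u v 1).re + (Tmap u v qi).imI + (Tmap u v qj).imJ + (Tmap u v qk).imK = 4 := by
  simp only [Tmap, Quaternion.re_mul, Quaternion.imI_mul, Quaternion.imJ_mul,
    Quaternion.imK_mul, Quaternion.re_sub, Quaternion.imI_sub, Quaternion.imJ_sub,
    Quaternion.imK_sub, Quaternion.re_one, Quaternion.imI_one, Quaternion.imJ_one,
    Quaternion.imK_one]
  simp only [qi, qj, qk]
  ring

lemma conj_comm_of {K : Type*} [DivisionRing K] {w u i y : K} (hw : w ≠ 0)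
    (hwu : w*u = i*w) (h : u*y = y*u) : i*(w*y*w⁻¹) = (w*y*w⁻¹)*i := by
  have huw : u*w⁻¹ = w⁻¹*i := by
    have e : w * (u * w⁻¹) = i := by
      rw [← mul_assoc, hwu, mul_assoc, mul_inv_cancel₀ hw, mul_one]
    rw [← e, ← mul_assoc, inv_mul_cancel₀ hw, one_mul]
  calc i*(w*y*w⁻¹) = ((i*w)*y)*w⁻¹ := by noncomm_ring
    _ = ((w*u)*y)*w⁻¹ := by rw [hwu]
    _ = w*((u*y)*w⁻¹) := by noncomm_ring
    _ = w*((y*u)*w⁻¹) := by rw [h]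
    _ = (w*y)*(u*w⁻¹) := by noncomm_ring
    _ = (w*y)*(w⁻¹*i) := by rw [huw]
    _ = (w*y*w⁻¹)*i := by noncomm_ring

lemma conj_anticomm_of {K : Type*} [DivisionRing K] {w u i y : K} (hw : w ≠ 0)
    (hwu : w*u = i*w) (h : u*y = -(y*u)) : i*(w*y*w⁻¹) = -((w*y*w⁻¹)*i) := by
  have huw : u*w⁻¹ = w⁻¹*i := by
    have e : w * (u * w⁻¹) = i := by
      rw [← mul_assoc, hwu, mul_assoc, mul_inv_cancel₀ hw, mul_one]
    rw [← e, ← mul_assoc, inv_mul_cancel₀ hw, one_mul]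
  calc i*(w*y*w⁻¹) = ((i*w)*y)*w⁻¹ := by noncomm_ring
    _ = ((w*u)*y)*w⁻¹ := by rw [hwu]
    _ = w*((u*y)*w⁻¹) := by noncomm_ring
    _ = w*((-(y*u))*w⁻¹) := by rw [h]
    _ = -((w*y)*(u*w⁻¹)) := by noncomm_ring
    _ = -((w*y)*(w⁻¹*i)) := by rw [huw]
    _ = -((w*y*w⁻¹)*i) := by noncomm_ring

lemma commutator_comm {K : Type*} [DivisionRing K] {A B y : K} (hB : B ≠ 0)
    (h : (A*y = y*A ∧ B*y = y*B) ∨ (A*y = -(y*A) ∧ B*y = -(y*B))) :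
    (B⁻¹*A)*y = y*(B⁻¹*A) := by
  rcases h with ⟨hA, hB'⟩ | ⟨hA, hB'⟩
  · have hBi := inv_comm_pos hB hB'
    calc (B⁻¹*A)*y = B⁻¹*(A*y) := by noncomm_ring
      _ = (B⁻¹*y)*A := by rw [hA]; noncomm_ring
      _ = (y*B⁻¹)*A := by rw [hBi]
      _ = y*(B⁻¹*A) := by noncomm_ring
  · have hBi := inv_comm_neg hB hB'
    calc (B⁻¹*A)*y = B⁻¹*(A*y) := by noncomm_ring
      _ = -((B⁻¹*y)*A) := by rw [hA]; noncomm_ring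
      _ = -((-(y*B⁻¹))*A) := by rw [hBi]
      _ = y*(B⁻¹*A) := by noncomm_ring


set_option maxHeartbeats 1000000 in
/-- If an irreducible projective representation `ρ` is conjugate to its twists by two distinct
nontrivial sign homomorphisms, then it factors, up to conjugation, through the quaternion
group `Q8`. -/
theorem factors_through_Q8 {G : Type*} [Group G] (ρ : G → ℍ[ℝ]) (hρ : IsProjRep ρ)
    (hirr : IsIrred ρ)
    (α β : G → ℍ[ℝ]) (hα : IsSignHom α) (hβ : IsSignHom β)
    (hα1 : ∃ g : G, α g ≠ 1) (hβ1 : ∃ g : G, β g ≠ 1) (hαβ : α ≠ β)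
    (u v : ℍ[ℝ]) (hu : ‖u‖ = 1) (hv : ‖v‖ = 1)
    (huα : ∀ g : G, α g * ρ g = u * ρ g * u⁻¹)
    (hvβ : ∀ g : G, β g * ρ g = v * ρ g * v⁻¹) :
    ∃ w : ℍ[ℝ], ‖w‖ = 1 ∧ ∀ g : G, w * ρ g * w⁻¹ ∈ Q8 := by
  obtain ⟨hnorm, -⟩ := hρ
  have hρne : ∀ g : G, ρ g ≠ 0 := by
    intro g h
    have h2 := hnorm g
    rw [h, norm_zero] at h2
    exact zero_ne_one h2
  have hune : u ≠ 0 := by intro h; rw [h, norm_zero] at hu; exact zero_ne_one hu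
  have hvne : v ≠ 0 := by intro h; rw [h, norm_zero] at hv; exact zero_ne_one hv
  have huρ : ∀ g, u * ρ g = α g * ρ g * u := by
    intro g
    calc u * ρ g = u * ρ g * u⁻¹ * u := by rw [mul_assoc, inv_mul_cancel₀ hune, mul_one]
      _ = α g * ρ g * u := by rw [← huα g]
  have hvρ : ∀ g, v * ρ g = β g * ρ g * v := by
    intro g
    calc v * ρ g = v * ρ g * v⁻¹ * v := by rw [mul_assoc, inv_mul_cancel₀ hvne, mul_one]
      _ = β g * ρ g * v := by rw [← hvβ g]
  have hU1 : ∀ g, α g = 1 → u * ρ g = ρ g * u := fun g h => by rw [huρ g, h, one_mul]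
  have hU2 : ∀ g, α g = -1 → u * ρ g = -(ρ g * u) := fun g h => by
    rw [huρ g, h, neg_one_mul, neg_mul]
  have hV1 : ∀ g, β g = 1 → v * ρ g = ρ g * v := fun g h => by rw [hvρ g, h, one_mul]
  have hV2 : ∀ g, β g = -1 → v * ρ g = -(ρ g * v) := fun g h => by
    rw [hvρ g, h, neg_one_mul, neg_mul]
  have huu : u * u = -1 := by
    have hcu : ∀ g, (u*u) * ρ g = ρ g * (u*u) := by
      intro g
      rcases hα.1 g with h | h
      · exact sq_comm_pos (hU1 g h)
      · exact sq_comm_neg (hU2 g h)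
    rcases hirr (u*u) (by rw [norm_mul, hu, one_mul]) hcu with h | h
    · exfalso
      obtain ⟨g0, hg0⟩ := hα1
      apply hg0
      rcases sq_pm h with h1 | h1 <;>
      · have h2 := huα g0
        rw [h1] at h2
        simp only [inv_neg, inv_one, one_mul, mul_one, neg_mul, mul_neg, neg_neg] at h2
        exact mul_right_cancel₀ (hρne g0) (by rw [h2, one_mul])
    · exact h
  have hvv : v * v = -1 := by
    have hcv : ∀ g, (v*v) * ρ g = ρ g * (v*v) := by
      intro g
      rcases hβ.1 g with h | h
      · exact sq_comm_pos (hV1 g h)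
      · exact sq_comm_neg (hV2 g h)
    rcases hirr (v*v) (by rw [norm_mul, hv, one_mul]) hcv with h | h
    · exfalso
      obtain ⟨g0, hg0⟩ := hβ1
      apply hg0
      rcases sq_pm h with h1 | h1 <;>
      · have h2 := hvβ g0
        rw [h1] at h2
        simp only [inv_neg, inv_one, one_mul, mul_one, neg_mul, mul_neg, neg_neg] at h2
        exact mul_right_cancel₀ (hρne g0) (by rw [h2, one_mul])
    · exact h
  have hur := pure_of_sq_neg_one huu
  have hvr := pure_of_sq_neg_one hvv
  have hun : u.imI^2 + u.imJ^2 + u.imK^2 = 1 := by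
    have h1 : Quaternion.normSq u = 1 := by
      rw [Quaternion.normSq_eq_norm_mul_self, hu, one_mul]
    rw [Quaternion.normSq_def', hur] at h1
    nlinarith [h1]
  have hvn : v.imI^2 + v.imJ^2 + v.imK^2 = 1 := by
    have h1 : Quaternion.normSq v = 1 := by
      rw [Quaternion.normSq_eq_norm_mul_self, hv, one_mul]
    rw [Quaternion.normSq_def', hvr] at h1
    nlinarith [h1]
  have hvu_ne : v*u ≠ 0 := mul_ne_zero hvne hune
  have hq : ∀ g, ((v*u)⁻¹*(u*v)) * ρ g = ρ g * ((v*u)⁻¹*(u*v)) := by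
    intro g
    rcases hα.1 g with ha | ha <;> rcases hβ.1 g with hb | hb
    · exact commutator_comm hvu_ne
        (Or.inl ⟨mul_conj_pp (hU1 g ha) (hV1 g hb), mul_conj_pp (hV1 g hb) (hU1 g ha)⟩)
    · exact commutator_comm hvu_ne
        (Or.inr ⟨mul_conj_pn (hU1 g ha) (hV2 g hb), mul_conj_np (hV2 g hb) (hU1 g ha)⟩)
    · exact commutator_comm hvu_ne
        (Or.inr ⟨mul_conj_np (hU2 g ha) (hV1 g hb), mul_conj_pn (hV1 g hb) (hU2 g ha)⟩)
    · exact commutator_comm hvu_ne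
        (Or.inl ⟨mul_conj_nn (hU2 g ha) (hV2 g hb), mul_conj_nn (hV2 g hb) (hU2 g ha)⟩)
  have hqn : ‖(v*u)⁻¹*(u*v)‖ = 1 := by
    rw [norm_mul, norm_inv, norm_mul, norm_mul, hu, hv]; norm_num
  rcases hirr _ hqn hq with hcase | hcase
  · -- u and v commute: contradiction with α ≠ β
    exfalso
    have hcomm : u*v = v*u := by
      have h2 := congrArg (fun x => (v*u) * x) hcase
      simp only [mul_one] at h2
      rw [← mul_assoc, mul_inv_cancel₀ hvu_ne, one_mul] at h2
      exact h2
    have hveq := comm_pure_units hur hvr hun hcomm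
    set c : ℝ := u.imI*v.imI + u.imJ*v.imJ + u.imK*v.imK with hc
    have hc2 : c^2 = 1 := by
      have h1 := congrArg QuaternionAlgebra.imI hveq
      have h2 := congrArg QuaternionAlgebra.imJ hveq
      have h3 := congrArg QuaternionAlgebra.imK hveq
      simp only [Quaternion.imI_smul, Quaternion.imJ_smul, Quaternion.imK_smul,
        smul_eq_mul] at h1 h2 h3
      linear_combination (-(c^2))*hun + hvn - (v.imI + c*u.imI)*h1
        - (v.imJ + c*u.imJ)*h2 - (v.imK + c*u.imK)*h3
    have hvpm : v = u ∨ v = -u := by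
      rcases real_pm hc2 with h' | h'
      · left; rw [hveq, h', one_smul]
      · right; rw [hveq, h', neg_one_smul]
    apply hαβ
    funext g
    rcases hvpm with h' | h'
    · have h2 := hvβ g
      rw [h'] at h2
      exact (mul_right_cancel₀ (hρne g) ((huα g).trans h2.symm))
    · have h2 := hvβ g
      rw [h'] at h2
      simp only [inv_neg, mul_neg, neg_mul, neg_neg] at h2
      exact (mul_right_cancel₀ (hρne g) ((huα g).trans h2.symm))
  · -- u and v anticommute: construct the conjugator
    have hvu : v*u = -(u*v) := by
      have h2 := congrArg (fun x => (v*u) * x) hcase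
      simp only [mul_neg, mul_one] at h2
      rw [← mul_assoc, mul_inv_cancel₀ hvu_ne, one_mul] at h2
      rw [h2, neg_neg]
    have hii : qi*qi = -1 := by
      ext <;> simp [Quaternion.re_mul, Quaternion.imI_mul, Quaternion.imJ_mul, Quaternion.imK_mul] <;> simp [qi]
    have hjj : qj*qj = -1 := by
      ext <;> simp [Quaternion.re_mul, Quaternion.imI_mul, Quaternion.imJ_mul, Quaternion.imK_mul] <;> simp [qj]
    have hij : qi*qj = qk := by
      ext <;> simp [Quaternion.re_mul, Quaternion.imI_mul, Quaternion.imJ_mul, Quaternion.imK_mul] <;> simp [qi, qj, qk]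
    have hik : qi*qk = -qj := by
      ext <;> simp [Quaternion.re_mul, Quaternion.imI_mul, Quaternion.imJ_mul, Quaternion.imK_mul] <;> simp [qi, qj, qk]
    have hji : qj*qi = -qk := by
      ext <;> simp [Quaternion.re_mul, Quaternion.imI_mul, Quaternion.imJ_mul, Quaternion.imK_mul] <;> simp [qi, qj, qk]
    have hjk : qj*qk = qi := by
      ext <;> simp [Quaternion.re_mul, Quaternion.imI_mul, Quaternion.imJ_mul, Quaternion.imK_mul] <;> simp [qi, qj, qk]
    have hTU : ∀ e, (Tmap u v e) * u = qi * Tmap u v e := fun e => fixA hii huu hij hik hvu e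
    have hTV : ∀ e, (Tmap u v e) * v = qj * Tmap u v e := fun e => fixB hjj hvv hji hjk e
    obtain ⟨t, ht0, htu, htv⟩ : ∃ t : ℍ[ℝ], t ≠ 0 ∧ t*u = qi*t ∧ t*v = qj*t := by
      by_cases h1 : Tmap u v 1 = 0
      · by_cases h2 : Tmap u v qi = 0
        · by_cases h3 : Tmap u v qj = 0
          · by_cases h4 : Tmap u v qk = 0
            · exfalso
              have h5 := trace_four u v
              rw [h1, h2, h3, h4] at h5
              norm_num at h5
            · exact ⟨_, h4, hTU _, hTV _⟩
          · exact ⟨_, h3, hTU _, hTV _⟩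
        · exact ⟨_, h2, hTU _, hTV _⟩
      · exact ⟨_, h1, hTU _, hTV _⟩
    have htn : ‖t‖ ≠ 0 := norm_ne_zero_iff.mpr ht0
    obtain ⟨w, hwn, hwu, hwv⟩ : ∃ w : ℍ[ℝ], ‖w‖ = 1 ∧ w*u = qi*w ∧ w*v = qj*w := by
      refine ⟨‖t‖⁻¹ • t, ?_, ?_, ?_⟩
      · rw [norm_smul, norm_inv, norm_norm, inv_mul_cancel₀ htn]
      · rw [smul_mul_assoc, htu, mul_smul_comm]
      · rw [smul_mul_assoc, htv, mul_smul_comm]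
    have hwne : w ≠ 0 := by intro hh; rw [hh, norm_zero] at hwn; exact zero_ne_one hwn
    refine ⟨w, hwn, ?_⟩
    intro g
    have hxn : (w * ρ g * w⁻¹).re^2 + (w * ρ g * w⁻¹).imI^2 + (w * ρ g * w⁻¹).imJ^2
        + (w * ρ g * w⁻¹).imK^2 = 1 := by
      have hnx : ‖w * ρ g * w⁻¹‖ = 1 := by
        rw [norm_mul, norm_mul, norm_inv, hwn, hnorm g]; norm_num
      have h1 : Quaternion.normSq (w * ρ g * w⁻¹) = 1 := by
        rw [Quaternion.normSq_eq_norm_mul_self, hnx, one_mul]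
      rw [Quaternion.normSq_def'] at h1
      exact h1
    rcases hα.1 g with ha | ha <;> rcases hβ.1 g with hb | hb
    · obtain ⟨e2, e3⟩ := comm_i (conj_comm_of hwne hwu (hU1 g ha))
      obtain ⟨e1, -⟩ := comm_j (conj_comm_of hwne hwv (hV1 g hb))
      rcases cls_one hxn e1 e2 e3 with h' | h' <;> rw [h'] <;> simp [Q8]
    · obtain ⟨e2, e3⟩ := comm_i (conj_comm_of hwne hwu (hU1 g ha))
      obtain ⟨e1, -⟩ := anticomm_j (conj_anticomm_of hwne hwv (hV2 g hb))
      rcases cls_i hxn e1 e2 e3 with h' | h' <;> rw [h'] <;> simp [Q8]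
    · obtain ⟨e1, e2⟩ := anticomm_i (conj_anticomm_of hwne hwu (hU2 g ha))
      obtain ⟨-, e3⟩ := comm_j (conj_comm_of hwne hwv (hV1 g hb))
      rcases cls_j hxn e1 e2 e3 with h' | h' <;> rw [h'] <;> simp [Q8]
    · obtain ⟨e1, e2⟩ := anticomm_i (conj_anticomm_of hwne hwu (hU2 g ha))
      obtain ⟨-, e3⟩ := anticomm_j (conj_anticomm_of hwne hwv (hV2 g hb))
      rcases cls_k hxn e1 e2 e3 with h' | h' <;> rw [h'] <;> simp [Q8]
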